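/- Let X = (X,a) be a U-category (lax algebra for the ultrafilter monad over a quantale V satisfying the theory axioms, e.g. a topological space for V = 2). For A ⊆ X define φ_A(x) = ⋁{ a(𝔞,x) : 𝔞 an ultrafilter on X with A ∈ 𝔞 }. Then for every ultrafilter 𝔵 on X and every x ∈ X: a(𝔵,x) = ⋀_{A ∈ 𝔵} φ_A(x). -/
import Mathlib


/-- `ξ(𝔳) = ⋀_{A ∈ 𝔳} ⋁ A`, the structure map of the general ultrafilter theory. -/
noncomputable def xi {V : Type u} [CompleteLattice V] (𝔳 : Ultrafilter V) : V :=
  ⨅ A ∈ 𝔳, sSup A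

/-- The lax extension of the ultrafilter functor applied to the structure matrix
`a : X ⇸ UX`:  `T_ξ a (𝔛,𝔵) = ⋁ { ξ(Ua(𝔴)) ∣ 𝔴 ∈ U(UX × X), Uπ₁𝔴 = 𝔛, Uπ₂𝔴 = 𝔵 }`. -/
noncomputable def Uext {V : Type u} [CompleteLattice V] {X : Type v}
    (a : Ultrafilter X → X → V)
    (𝔛 : Ultrafilter (Ultrafilter X)) (𝔵 : Ultrafilter X) : V :=
  ⨆ 𝔴 : {w : Ultrafilter (Ultrafilter X × X) //
      w.map Prod.fst = 𝔛 ∧ w.map Prod.snd = 𝔵},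
    xi ((𝔴 : Ultrafilter (Ultrafilter X × X)).map fun p => a p.1 p.2)

/-- For a `U`-category `(X,a)` over the general ultrafilter theory (`V` integral and
completely distributive), with `φ_A(x) = ⋁{a(𝔞,x) : A ∈ 𝔞}`, one has
`a(𝔵,x) = ⋀_{A ∈ 𝔵} φ_A(x)`. -/
theorem stmt16 {V : Type u} [CompleteLattice V] [CommMonoid V]
    (hd : ∀ (x : V) (S : Set V), x * sSup S = ⨆ s ∈ S, x * s)
    (hk : (1 : V) = ⊤)
    (hcd : ∀ w : V, w = sSup {u | ∀ S : Set V, w ≤ sSup S → ∃ s ∈ S, u ≤ s})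
    {X : Type v} (a : Ultrafilter X → X → V)
    (hunit : ∀ x : X, (1 : V) ≤ a (pure x) x)
    (htrans : ∀ (𝔛 : Ultrafilter (Ultrafilter X)) (𝔶 : Ultrafilter X) (x : X),
      Uext a 𝔛 𝔶 * a 𝔶 x ≤ a (𝔛.bind id) x) :
    ∀ (𝔵 : Ultrafilter X) (x : X),
      a 𝔵 x = ⨅ A ∈ 𝔵, ⨆ 𝔞 ∈ {𝔞 : Ultrafilter X | A ∈ 𝔞}, a 𝔞 x := by
  intro 𝔵 x
  refine le_antisymm (le_iInf₂ fun A hA => le_iSup₂_of_le 𝔵 hA le_rfl) ?_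
  set w : V := ⨅ A ∈ 𝔵, ⨆ 𝔞 ∈ {𝔞 : Ultrafilter X | A ∈ 𝔞}, a 𝔞 x with hw
  rw [hcd w]
  apply sSup_le
  intro u hu
  simp only [Set.mem_setOf_eq] at hu
  -- for each A ∈ 𝔵, there is an ultrafilter containing A with u ≤ a 𝔞 x
  have hwit : ∀ A ∈ 𝔵, ∃ 𝔞 : Ultrafilter X, A ∈ 𝔞 ∧ u ≤ a 𝔞 x := by
    intro A hA
    have h1 : w ≤ sSup ((fun 𝔞 => a 𝔞 x) '' {𝔞 : Ultrafilter X | A ∈ 𝔞}) := by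
      rw [sSup_image, hw]
      exact iInf₂_le A hA
    obtain ⟨s, hs, hus⟩ := hu _ h1
    obtain ⟨𝔞, h𝔞, rfl⟩ := hs
    exact ⟨𝔞, h𝔞, hus⟩
  set B : Set X → Set (Ultrafilter X) := fun A => {𝔞 | A ∈ 𝔞 ∧ u ≤ a 𝔞 x} with hB
  have hne : ∀ A ∈ 𝔵, (B A).Nonempty := fun A hA =>
    let ⟨𝔞, h1, h2⟩ := hwit A hA; ⟨𝔞, h1, h2⟩
  -- build an ultrafilter on Ultrafilter X containing all B A, A ∈ 𝔵
  haveI : Nonempty {A : Set X // A ∈ 𝔵} := ⟨⟨Set.univ, Filter.univ_mem⟩⟩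
  have hdir : Directed (· ≥ ·) fun A : {A : Set X // A ∈ 𝔵} =>
      Filter.principal (B A) := by
    rintro ⟨A, hA⟩ ⟨A', hA'⟩
    refine ⟨⟨A ∩ A', Filter.inter_mem hA hA'⟩, ?_, ?_⟩ <;>
      · refine Filter.principal_mono.mpr ?_
        intro 𝔞 h𝔞
        exact ⟨Filter.mem_of_superset h𝔞.1 (by intro y hy; first
          | exact hy.1 | exact hy.2), h𝔞.2⟩
  haveI hFne : Filter.NeBot (⨅ A : {A : Set X // A ∈ 𝔵}, Filter.principal (B A)) := by
    apply Filter.iInf_neBot_of_directed' hdir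
    rintro ⟨A, hA⟩
    rw [Filter.principal_neBot_iff]
    exact hne A hA
  obtain ⟨𝔛, h𝔛⟩ := Ultrafilter.exists_le
    (⨅ A : {A : Set X // A ∈ 𝔵}, Filter.principal (B A))
  have hBA : ∀ A ∈ 𝔵, B A ∈ 𝔛 := by
    intro A hA
    exact h𝔛 (Filter.mem_iInf_of_mem ⟨A, hA⟩ (Filter.mem_principal_self _))
  -- the multiplication of 𝔛 is 𝔵
  have hbind : 𝔛.bind id = 𝔵 := by
    have hle : (𝔛.bind id : Filter X) ≤ (𝔵 : Filter X) := by
      intro A hA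
      have : {𝔞 : Ultrafilter X | A ∈ 𝔞} ∈ 𝔛 :=
        Filter.mem_of_superset (hBA A hA) fun 𝔞 h𝔞 => h𝔞.1
      exact Ultrafilter.mem_coe.mpr (this)
    exact Ultrafilter.coe_injective (Ultrafilter.unique 𝔵 hle)
  -- a(pure x, x) = 1
  have hpx : a (pure x) x = 1 := le_antisymm (hk ▸ le_top) (hunit x)
  -- u ≤ Uext a 𝔛 (pure x)
  have hUext : u ≤ Uext a 𝔛 (pure x) := by
    have hfst : (𝔛.map (fun 𝔞 => (𝔞, x))).map Prod.fst = 𝔛 := by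
      rw [Ultrafilter.map_map]; exact Ultrafilter.map_id' 𝔛
    have hsnd : (𝔛.map (fun 𝔞 => (𝔞, x))).map Prod.snd = pure x := by
      rw [Ultrafilter.map_map]
      show 𝔛.map (fun _ => x) = pure x
      apply Ultrafilter.coe_injective
      rw [Ultrafilter.coe_map, Ultrafilter.coe_pure, Filter.map_const]
    refine le_iSup_of_le ⟨𝔛.map (fun 𝔞 => (𝔞, x)), hfst, hsnd⟩ ?_
    simp only [Ultrafilter.map_map]
    refine le_iInf₂ fun S hS => ?_
    have h1 : (fun 𝔞 : Ultrafilter X => a 𝔞 x) ⁻¹' S ∈ 𝔛 :=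
      Ultrafilter.mem_map.mp hS
    have h2 : ((fun 𝔞 : Ultrafilter X => a 𝔞 x) ⁻¹' S ∩ B Set.univ) ∈ 𝔛 :=
      Filter.inter_mem h1 (hBA Set.univ Filter.univ_mem)
    obtain ⟨𝔞, h𝔞1, h𝔞2⟩ := Ultrafilter.nonempty_of_mem h2
    exact le_trans h𝔞2.2 (le_sSup h𝔞1)
  calc u ≤ Uext a 𝔛 (pure x) * a (pure x) x := by rw [hpx, mul_one]; exact hUext
    _ ≤ a (𝔛.bind id) x := htrans 𝔛 (pure x) x
    _ = a 𝔵 x := by rw [hbind]
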